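/- arXiv:1605.06530 — 4 statements merged into one kernel-verified Lean document; each statement's English description precedes it below -/
import Mathlib

section
/- Let G be a finite connected weighted graph and let (τ_{ij}) be its coalescence times. Then τ^{(1)} + τ^{(2)} ≥ τ^{(3)}, with equality if and only if G has exactly two vertices and no self-loops. -/
set_option linter.unusedSectionVars false


open Finset Filter Asymptotics

noncomputable section

namespace EvoGraph

variable {V : Type*} [Fintype V] [DecidableEq V]

/-- Weighted degree `w_i = ∑_j w_{ij}`. -/
def deg (w : V → V → ℝ) (i : V) : ℝ := ∑ j, w i j

/-- Total edge weight `W = ∑_i w_i`. -/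
def Wtot (w : V → V → ℝ) : ℝ := ∑ i, deg w i

/-- Random-walk step probability `p_{ij} = w_{ij}/w_i`. -/
def step (w : V → V → ℝ) (i j : V) : ℝ := w i j / deg w i

/-- The stochastic matrix `(p_{ij})`. -/
def stepMat (w : V → V → ℝ) : Matrix V V ℝ := Matrix.of fun i j => step w i j

/-- `n`-step probability `p^{(n)}_{ij}`: the `(i,j)` entry of the `n`-th power of `(p_{ij})`. -/
def stepN (w : V → V → ℝ) (n : ℕ) (i j : V) : ℝ := (stepMat w ^ n) i j

/-- Stationary distribution `π_i = w_i / W`. -/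
def statDist (w : V → V → ℝ) (i : V) : ℝ := deg w i / Wtot w

/-- `w` is a finite connected weighted graph: symmetric nonnegative weights
(self-loops allowed), positive weighted degrees, and any two vertices joined by
a path of edges of positive weight. -/
def IsWeightedGraph (w : V → V → ℝ) : Prop :=
  (∀ i j, w i j = w j i) ∧ (∀ i j, 0 ≤ w i j) ∧ (∀ i, 0 < deg w i) ∧
  ∀ i j : V, Relation.ReflTransGen (fun a b => 0 < w a b) i j

/-- `τ` is the (symmetric) solution of the coalescence-time system:
`τ_{ii} = 0`, and `τ_{ij} = 1 + (1/2) ∑_k (p_{ik} τ_{kj} + p_{jk} τ_{ik})` for `i ≠ j`. -/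
def IsCoalescent (w : V → V → ℝ) (τ : V → V → ℝ) : Prop :=
  (∀ i j, τ i j = τ j i) ∧ (∀ i, τ i i = 0) ∧
  ∀ i j, i ≠ j →
    τ i j = 1 + (1 / 2) * ∑ k, (step w i k * τ k j + step w j k * τ i k)

/-- `τ^{(n)} = ∑_{i,j} π_i p^{(n)}_{ij} τ_{ij}`. -/
def tauWalk (w τ : V → V → ℝ) (n : ℕ) : ℝ :=
  ∑ i, ∑ j, statDist w i * stepN w n i j * τ i j

/-- Remeeting time `τ⁺_i = 1 + ∑_j p_{ij} τ_{ij}`. -/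
def remeet (w τ : V → V → ℝ) (i : V) : ℝ := 1 + ∑ j, step w i j * τ i j

variable {w : V → V → ℝ}

lemma step_nonneg (hG : IsWeightedGraph w) (i j : V) : 0 ≤ step w i j :=
  div_nonneg (hG.2.1 i j) (hG.2.2.1 i).le

lemma step_sum (hG : IsWeightedGraph w) (i : V) : ∑ j, step w i j = 1 := by
  unfold step
  rw [← Finset.sum_div, ← deg, div_self (hG.2.2.1 i).ne']

lemma step_le_one (hG : IsWeightedGraph w) (i j : V) : step w i j ≤ 1 := by
  rw [step, div_le_one (hG.2.2.1 i)]
  exact Finset.single_le_sum (fun k _ => hG.2.1 i k) (mem_univ j)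

lemma stepN_zero (i j : V) : stepN w 0 i j = if i = j then 1 else 0 := by
  simp [stepN, Matrix.one_apply]

lemma stepN_one (i j : V) : stepN w 1 i j = step w i j := by
  simp [stepN, stepMat]

lemma stepN_succ (n : ℕ) (i j : V) :
    stepN w (n + 1) i j = ∑ k, stepN w n i k * step w k j := by
  simp [stepN, pow_succ, Matrix.mul_apply, stepMat]

lemma stepN_succ' (n : ℕ) (i j : V) :
    stepN w (n + 1) i j = ∑ k, step w i k * stepN w n k j := by
  simp [stepN, pow_succ', Matrix.mul_apply, stepMat]

lemma stepN_nonneg (hG : IsWeightedGraph w) (n : ℕ) (i j : V) : 0 ≤ stepN w n i j := by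
  induction n generalizing i j with
  | zero => rw [stepN_zero]; positivity
  | succ n ih =>
    rw [stepN_succ]
    exact Finset.sum_nonneg fun k _ => mul_nonneg (ih i k) (step_nonneg hG k j)

lemma stepN_sum (hG : IsWeightedGraph w) (n : ℕ) (i : V) : ∑ j, stepN w n i j = 1 := by
  induction n generalizing i with
  | zero => simp [stepN_zero]
  | succ n ih =>
    simp only [stepN_succ]
    rw [Finset.sum_comm]
    calc ∑ k, ∑ j, stepN w n i k * step w k j
        = ∑ k, stepN w n i k * ∑ j, step w k j := by simp [Finset.mul_sum]
      _ = 1 := by simp only [step_sum hG, mul_one]; exact ih i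

lemma stepN_le_one (hG : IsWeightedGraph w) (n : ℕ) (i j : V) : stepN w n i j ≤ 1 := by
  calc stepN w n i j ≤ ∑ k, stepN w n i k :=
        Finset.single_le_sum (fun k _ => stepN_nonneg hG n i k) (mem_univ j)
    _ = 1 := stepN_sum hG n i

lemma Wtot_pos [Nonempty V] (hG : IsWeightedGraph w) : 0 < Wtot w :=
  Finset.sum_pos (fun i _ => hG.2.2.1 i) univ_nonempty

lemma statDist_pos [Nonempty V] (hG : IsWeightedGraph w) (i : V) : 0 < statDist w i :=
  div_pos (hG.2.2.1 i) (Wtot_pos hG)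

lemma statDist_sum [Nonempty V] (hG : IsWeightedGraph w) : ∑ i, statDist w i = 1 := by
  unfold statDist
  rw [← Finset.sum_div, ← Wtot, div_self (Wtot_pos hG).ne']

lemma rev (hG : IsWeightedGraph w) (i j : V) :
    statDist w i * step w i j = statDist w j * step w j i := by
  unfold statDist step
  rw [div_mul_div_comm, div_mul_div_comm, mul_comm (deg w i) (w i j),
    mul_div_mul_right _ _ (hG.2.2.1 i).ne', mul_comm (deg w j) (w j i),
    mul_div_mul_right _ _ (hG.2.2.1 j).ne', hG.1 i j]


-- τ is nonnegative, and ≥ 1 off the diagonal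
lemma tau_ge_one (hG : IsWeightedGraph w) (hN : 2 ≤ Fintype.card V)
    {τ : V → V → ℝ} (hτ : IsCoalescent w τ) :
    ∀ i j, i ≠ j → 1 ≤ τ i j := by
  obtain ⟨a, b, hab⟩ := Fintype.exists_pair_of_one_lt_card (α := V) (by omega)
  obtain ⟨p, hp, hmin⟩ := Finset.exists_min_image Finset.univ.offDiag
    (fun q => τ q.1 q.2) ⟨(a, b), by simp [hab]⟩
  set m := τ p.1 p.2 with hm
  have hpne : p.1 ≠ p.2 := (Finset.mem_offDiag.mp hp).2.2
  have hlow : ∀ k l, min m 0 ≤ τ k l := by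
    intro k l
    by_cases h : k = l
    · simp [h, hτ.2.1 l]
    · exact le_trans (min_le_left _ _) (hmin (k, l) (by simp [h]))
  have hrec := hτ.2.2 p.1 p.2 hpne
  have hbound : 1 + min m 0 ≤ m := by
    have h1 : ∀ k, step w p.1 k * min m 0 + step w p.2 k * min m 0 ≤
        step w p.1 k * τ k p.2 + step w p.2 k * τ p.1 k := fun k =>
      add_le_add (mul_le_mul_of_nonneg_left (hlow k p.2) (step_nonneg hG _ _))
        (mul_le_mul_of_nonneg_left (hlow p.1 k) (step_nonneg hG _ _))
    have h2 : ∑ k, (step w p.1 k * min m 0 + step w p.2 k * min m 0) = 2 * min m 0 := by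
      rw [Finset.sum_add_distrib, ← Finset.sum_mul, ← Finset.sum_mul,
        step_sum hG, step_sum hG]
      ring
    have h3 := Finset.sum_le_sum (s := Finset.univ) (fun k _ => h1 k)
    rw [h2] at h3
    linarith [hrec, hm, h3]
  have hm1 : 1 ≤ m := by
    rcases le_or_gt 0 m with h | h
    · rwa [min_eq_right h, add_zero] at hbound
    · rw [min_eq_left h.le] at hbound; linarith
  intro i j hij
  exact le_trans hm1 (hmin (i, j) (by simp [hij]))

lemma tau_nonneg (hG : IsWeightedGraph w) (hN : 2 ≤ Fintype.card V)
    {τ : V → V → ℝ} (hτ : IsCoalescent w τ) : ∀ i j, 0 ≤ τ i j := by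
  intro i j
  by_cases h : i = j
  · simp [h, hτ.2.1 j]
  · linarith [tau_ge_one hG hN hτ i j h]

lemma remeet_ge_one (hG : IsWeightedGraph w) (hN : 2 ≤ Fintype.card V)
    {τ : V → V → ℝ} (hτ : IsCoalescent w τ) (i : V) : 1 ≤ remeet w τ i := by
  have : 0 ≤ ∑ j, step w i j * τ i j :=
    Finset.sum_nonneg fun j _ => mul_nonneg (step_nonneg hG i j) (tau_nonneg hG hN hτ i j)
  unfold remeet; linarith

lemma tauWalk_zero {τ : V → V → ℝ} (hτ : IsCoalescent w τ) : tauWalk w τ 0 = 0 := by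
  unfold tauWalk
  refine Finset.sum_eq_zero fun i _ => Finset.sum_eq_zero fun j _ => ?_
  rw [stepN_zero]
  by_cases h : i = j
  · simp [h, hτ.2.1 j]
  · simp [h]

-- the key identity
lemma tau_key [Nonempty V] (hG : IsWeightedGraph w)
    {τ : V → V → ℝ} (hτ : IsCoalescent w τ) (n : ℕ) :
    tauWalk w τ (n + 1) = tauWalk w τ n - 1 +
      ∑ i, statDist w i * stepN w n i i * remeet w τ i := by
  have claim1 : ∀ i j, (1 : ℝ) + (1 / 2) * ∑ k,
      (step w i k * τ k j + step w j k * τ i k)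
      = τ i j + (if i = j then remeet w τ i else 0) := by
    intro i j
    by_cases h : i = j
    · subst h
      have h2 : ∑ k, (step w i k * τ k i + step w i k * τ i k)
          = 2 * ∑ k, step w i k * τ i k := by
        rw [Finset.mul_sum]
        exact Finset.sum_congr rfl fun k _ => by rw [hτ.1 k i]; ring
      rw [if_pos rfl, hτ.2.1 i, zero_add, h2, remeet]
      ring
    · rw [← hτ.2.2 i j h, if_neg h, add_zero]
  -- sum both sides against π_i P^n_ij
  have main : ∑ i, ∑ j, statDist w i * stepN w n i j *
      (1 + (1 / 2) * ∑ k, (step w i k * τ k j + step w j k * τ i k))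
      = tauWalk w τ n + ∑ i, statDist w i * stepN w n i i * remeet w τ i := by
    simp only [claim1, tauWalk]
    rw [← Finset.sum_add_distrib]
    refine Finset.sum_congr rfl fun i _ => ?_
    rw [show ∑ j, statDist w i * stepN w n i j * (τ i j + if i = j then remeet w τ i else 0)
        = ∑ j, (statDist w i * stepN w n i j * τ i j +
          if i = j then statDist w i * stepN w n i j * remeet w τ i else 0) from
      Finset.sum_congr rfl fun j _ => by by_cases h : i = j <;> simp [h] <;> ring]
    rw [Finset.sum_add_distrib, Finset.sum_ite_eq Finset.univ i
      (fun j => statDist w i * stepN w n i j * remeet w τ i)]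
    simp [tauWalk]
  -- expansion
  have hT2 : ∑ i, ∑ j, ∑ k, statDist w i * stepN w n i j * (step w j k * τ i k)
      = tauWalk w τ (n + 1) := by
    unfold tauWalk
    refine Finset.sum_congr rfl fun i _ => ?_
    rw [Finset.sum_comm]
    refine Finset.sum_congr rfl fun k _ => ?_
    rw [stepN_succ, Finset.mul_sum, Finset.sum_mul]
    exact Finset.sum_congr rfl fun j _ => by ring
  have hT1 : ∑ i, ∑ j, ∑ k, statDist w i * stepN w n i j * (step w i k * τ k j)
      = tauWalk w τ (n + 1) := by
    unfold tauWalk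
    rw [Finset.sum_comm]
    rw [show ∑ j, ∑ i, ∑ k, statDist w i * stepN w n i j * (step w i k * τ k j)
        = ∑ j, ∑ k, ∑ i, statDist w i * stepN w n i j * (step w i k * τ k j) from
      Finset.sum_congr rfl fun j _ => Finset.sum_comm]
    rw [Finset.sum_comm]
    refine Finset.sum_congr rfl fun k _ => ?_
    refine Finset.sum_congr rfl fun j _ => ?_
    rw [stepN_succ', Finset.mul_sum, Finset.sum_mul]
    refine Finset.sum_congr rfl fun i _ => ?_
    have := rev hG i k
    calc statDist w i * stepN w n i j * (step w i k * τ k j)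
        = (statDist w i * step w i k) * stepN w n i j * τ k j := by ring
      _ = (statDist w k * step w k i) * stepN w n i j * τ k j := by rw [this]
      _ = statDist w k * (step w k i * stepN w n i j) * τ k j := by ring
  have hOne : ∑ i, ∑ j, statDist w i * stepN w n i j = 1 := by
    calc ∑ i, ∑ j, statDist w i * stepN w n i j
        = ∑ i, statDist w i * ∑ j, stepN w n i j := by simp [Finset.mul_sum]
      _ = 1 := by simp only [stepN_sum hG, mul_one]; exact statDist_sum hG
  have expand : ∑ i, ∑ j, statDist w i * stepN w n i j *
      (1 + (1 / 2) * ∑ k, (step w i k * τ k j + step w j k * τ i k))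
      = 1 + tauWalk w τ (n + 1) := by
    have perterm : ∀ i j, statDist w i * stepN w n i j *
        (1 + (1 / 2) * ∑ k, (step w i k * τ k j + step w j k * τ i k))
        = statDist w i * stepN w n i j +
          (1 / 2) * ((∑ k, statDist w i * stepN w n i j * (step w i k * τ k j)) +
            (∑ k, statDist w i * stepN w n i j * (step w j k * τ i k))) := by
      intro i j
      have h : (∑ k, statDist w i * stepN w n i j * (step w i k * τ k j)) +
          (∑ k, statDist w i * stepN w n i j * (step w j k * τ i k))
          = statDist w i * stepN w n i j * ∑ k, (step w i k * τ k j + step w j k * τ i k) := by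
        rw [Finset.mul_sum, ← Finset.sum_add_distrib]
        exact Finset.sum_congr rfl fun k _ => by ring
      rw [h]; ring
    simp only [perterm]
    have hgoal : (1:ℝ) + tauWalk w τ (n + 1)
        = (∑ i, ∑ j, statDist w i * stepN w n i j) + (1/2) *
          ((∑ i, ∑ j, ∑ k, statDist w i * stepN w n i j * (step w i k * τ k j)) +
           (∑ i, ∑ j, ∑ k, statDist w i * stepN w n i j * (step w j k * τ i k))) := by
      rw [hT1, hT2, hOne]; ring
    rw [hgoal]
    simp only [Finset.sum_add_distrib, ← Finset.mul_sum]
  rw [main] at expand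
  linarith


lemma step_pos_iff (hG : IsWeightedGraph w) (i j : V) :
    0 < step w i j ↔ 0 < w i j := by
  rw [step, div_pos_iff_of_pos_right (hG.2.2.1 i)]

lemma stepN_two (i : V) : stepN w 2 i i = ∑ k, step w i k * step w k i := by
  rw [show (2:ℕ) = 1 + 1 from rfl, stepN_succ]
  simp [stepN_one]

lemma step_eq_one_iff (hG : IsWeightedGraph w) (k i : V) :
    step w k i = 1 ↔ ∀ l, l ≠ i → w k l = 0 := by
  rw [step, div_eq_one_iff_eq (hG.2.2.1 k).ne']
  constructor
  · intro h l hl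
    have hsum : ∑ x ∈ Finset.univ.erase i, w k x = 0 := by
      have := Finset.add_sum_erase Finset.univ (w k) (Finset.mem_univ i)
      rw [← deg] at this
      linarith [this, h]
    have := (Finset.sum_eq_zero_iff_of_nonneg
      (fun x _ => hG.2.1 k x)).mp hsum l (by simp [hl])
    exact this
  · intro h
    rw [deg, Finset.sum_eq_single i (fun l _ hl => h l hl) (fun hi => absurd (Finset.mem_univ i) hi)]

lemma stepN2_eq_one_iff (hG : IsWeightedGraph w) (i : V) :
    stepN w 2 i i = 1 ↔ ∀ k, 0 < w i k → step w k i = 1 := by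
  have hgap : 1 - stepN w 2 i i = ∑ k, step w i k * (1 - step w k i) := by
    rw [stepN_two]
    have : ∑ k, step w i k * (1 - step w k i)
        = ∑ k, (step w i k - step w i k * step w k i) := by
      exact Finset.sum_congr rfl fun k _ => by ring
    rw [this, Finset.sum_sub_distrib, step_sum hG]
  constructor
  · intro h k hk
    have hz : ∑ k, step w i k * (1 - step w k i) = 0 := by rw [← hgap, h]; ring
    have hterm := (Finset.sum_eq_zero_iff_of_nonneg (fun l _ =>
      mul_nonneg (step_nonneg hG i l) (by linarith [step_le_one hG l i]))).mp hz k (mem_univ k)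
    rcases mul_eq_zero.mp hterm with h1 | h1
    · exact absurd h1 ((step_pos_iff hG i k).mpr hk).ne'
    · linarith
  · intro h
    have hz : ∀ k, step w i k * (1 - step w k i) = 0 := by
      intro k
      rcases lt_or_eq_of_le (hG.2.1 i k) with hk | hk
      · rw [h k hk]; ring
      · rw [step, ← hk, zero_div, zero_mul]
    have : 1 - stepN w 2 i i = 0 := by rw [hgap]; exact Finset.sum_eq_zero fun k _ => hz k
    linarith

lemma reach_closed (S : Set V) (hS : ∀ a ∈ S, ∀ b, 0 < w a b → b ∈ S) {i j : V}
    (hi : i ∈ S) (h : Relation.ReflTransGen (fun a b => 0 < w a b) i j) : j ∈ S := by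
  induction h with
  | refl => exact hi
  | tail _ hbc ih => exact hS _ ih _ hbc

def Hcond (w : V → V → ℝ) : Prop := ∀ i k, 0 < w i k → ∀ l, l ≠ i → w k l = 0

lemma exists_nbr (hG : IsWeightedGraph w) (i : V) : ∃ j, 0 < w i j := by
  by_contra h
  push_neg at h
  have : deg w i = 0 := by
    rw [deg]
    exact Finset.sum_eq_zero fun j _ => le_antisymm (h j) (hG.2.1 i j)
  exact (hG.2.2.1 i).ne' this

lemma Hcond_iff (hG : IsWeightedGraph w) (hN : 2 ≤ Fintype.card V) :
    Hcond w ↔ (Fintype.card V = 2 ∧ ∀ i, w i i = 0) := by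
  constructor
  · intro H
    have hloop : ∀ i, w i i = 0 := by
      intro i
      by_contra h
      have hpos : 0 < w i i := lt_of_le_of_ne (hG.2.1 i i) (Ne.symm h)
      obtain ⟨j, hj⟩ := Fintype.exists_ne_of_one_lt_card (by omega) i
      have : j ∈ ({i} : Set V) := by
        refine reach_closed ({i} : Set V) ?_ rfl (hG.2.2.2 i j)
        intro a ha b hb
        have ha' : a = i := ha
        subst ha'
        by_contra hbi
        exact hb.ne' (H a a hpos b hbi)
      exact hj this
    refine ⟨?_, hloop⟩
    obtain ⟨i⟩ := (Fintype.card_pos_iff.mp (by omega) : Nonempty V)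
    obtain ⟨j, hj⟩ := exists_nbr hG i
    have hji : j ≠ i := fun h => by rw [h, hloop i] at hj; exact lt_irrefl 0 hj
    have hwji : 0 < w j i := by rw [← hG.1 i j]; exact hj
    have hSij : ∀ x, x ∈ ({i, j} : Set V) := by
      intro x
      refine reach_closed ({i, j} : Set V) ?_ (Or.inl rfl) (hG.2.2.2 i x)
      intro a ha b hb
      rcases ha with ha | ha
      · subst ha
        right
        by_contra hbj
        exact hb.ne' (H j a hwji b hbj)
      · have ha' : a = j := ha
        subst ha'
        left
        by_contra hbi
        exact hb.ne' (H i a hj b hbi)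
    have hsub : (Finset.univ : Finset V) ⊆ {i, j} := fun x _ => by
      rcases hSij x with h | h
      · simp [h]
      · simp [Set.mem_singleton_iff.mp h]
    have hle : Fintype.card V ≤ 2 := by
      calc Fintype.card V = Finset.univ.card := rfl
        _ ≤ ({i, j} : Finset V).card := Finset.card_le_card hsub
        _ ≤ 2 := Finset.card_insert_le i {j} |>.trans (by simp)
    omega
  · rintro ⟨hcard, hloop⟩ a b hab l hla
    have hba : b ≠ a := fun h => by rw [h, hloop a] at hab; exact lt_irrefl 0 hab
    have huniv : ({a, b} : Finset V) = Finset.univ := by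
      apply Finset.eq_univ_of_card
      rw [Finset.card_insert_of_notMem (by simp [hba.symm]), Finset.card_singleton, hcard]
    have : l ∈ ({a, b} : Finset V) := huniv ▸ Finset.mem_univ l
    rcases Finset.mem_insert.mp this with h | h
    · exact absurd h hla
    · rw [Finset.mem_singleton.mp h]
      exact hloop b

lemma stepN2_all_iff (hG : IsWeightedGraph w) :
    (∀ i, stepN w 2 i i = 1) ↔ Hcond w := by
  constructor
  · intro h i k hik l hl
    exact (step_eq_one_iff hG k i).mp (((stepN2_eq_one_iff hG i).mp (h i)) k hik) l hl
  · intro H i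
    rw [stepN2_eq_one_iff hG]
    intro k hk
    exact (step_eq_one_iff hG k i).mpr (H i k hk)


/-- `τ^{(1)} + τ^{(2)} ≥ τ^{(3)}`, with equality iff `G` has
exactly two vertices and no self-loops. -/
theorem tau1_add_tau2_ge_tau3 (w : V → V → ℝ) (hG : IsWeightedGraph w)
    (hN : 2 ≤ Fintype.card V) (τ : V → V → ℝ) (hτ : IsCoalescent w τ) :
    tauWalk w τ 1 + tauWalk w τ 2 ≥ tauWalk w τ 3 ∧
    (tauWalk w τ 1 + tauWalk w τ 2 = tauWalk w τ 3 ↔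
      Fintype.card V = 2 ∧ ∀ i, w i i = 0) := by
  have : Nonempty V := Fintype.card_pos_iff.mp (by omega)
  have k0 := tau_key hG hτ 0
  have k2 := tau_key hG hτ 2
  rw [tauWalk_zero hτ] at k0
  have hS0 : ∑ i, statDist w i * stepN w 0 i i * remeet w τ i
      = ∑ i, statDist w i * remeet w τ i :=
    Finset.sum_congr rfl fun i _ => by rw [stepN_zero, if_pos rfl, mul_one]
  rw [hS0] at k0
  have hD : tauWalk w τ 1 + tauWalk w τ 2 - tauWalk w τ 3
      = ∑ i, statDist w i * (1 - stepN w 2 i i) * remeet w τ i := by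
    have hsplit : ∑ i, statDist w i * (1 - stepN w 2 i i) * remeet w τ i
        = (∑ i, statDist w i * remeet w τ i)
          - ∑ i, statDist w i * stepN w 2 i i * remeet w τ i := by
      rw [← Finset.sum_sub_distrib]
      exact Finset.sum_congr rfl fun i _ => by ring
    rw [hsplit]
    linarith [k0, k2]
  have hterm : ∀ i, 0 ≤ statDist w i * (1 - stepN w 2 i i) * remeet w τ i := fun i =>
    mul_nonneg (mul_nonneg (statDist_pos hG i).le
      (by linarith [stepN_le_one hG 2 i i]))
      (by linarith [remeet_ge_one hG hN hτ i])
  have hsumnn := Finset.sum_nonneg (fun i (_ : i ∈ Finset.univ) => hterm i)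
  constructor
  · linarith [hD, hsumnn]
  constructor
  · intro heq
    have hsum0 : ∑ i, statDist w i * (1 - stepN w 2 i i) * remeet w τ i = 0 := by
      linarith [hD]
    have hall := (Finset.sum_eq_zero_iff_of_nonneg
      (fun i _ => hterm i)).mp hsum0
    have hp2 : ∀ i, stepN w 2 i i = 1 := by
      intro i
      have h0 := hall i (Finset.mem_univ i)
      by_contra hne
      have h1 : (1 - stepN w 2 i i) ≠ 0 := fun h => hne (by linarith)
      exact (mul_ne_zero (mul_ne_zero (statDist_pos hG i).ne' h1)
        (by linarith [remeet_ge_one hG hN hτ i] : remeet w τ i ≠ 0)) h0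
    exact (Hcond_iff hG hN).mp ((stepN2_all_iff hG).mp hp2)
  · intro hc
    have hp2 := (stepN2_all_iff hG).mpr ((Hcond_iff hG hN).mpr hc)
    have hz : ∑ i, statDist w i * (1 - stepN w 2 i i) * remeet w τ i = 0 :=
      Finset.sum_eq_zero fun i _ => by rw [hp2 i]; ring
    linarith [hD, hz]

end EvoGraph
end
end

section
/- Let G be a finite connected weighted graph with coalescence times (τ_{ij}) and remeeting times τ⁺_i = 1 + Σ_{j∈V} p_{ij} τ_{ij}. Then Σ_{i∈V} π_i² τ⁺_i = 1. -/
open Finset Filter Asymptotics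

noncomputable section

namespace EvoGraph

variable {V : Type*} [Fintype V] [DecidableEq V]

/-- `∑_i π_i² τ⁺_i = 1`. -/
theorem sum_statDist_sq_remeet (w : V → V → ℝ) (hG : IsWeightedGraph w)
    (hN : 2 ≤ Fintype.card V) (τ : V → V → ℝ) (hτ : IsCoalescent w τ) :
    ∑ i, (statDist w i) ^ 2 * remeet w τ i = 1 := by
  obtain ⟨hsym, hnn, hdeg, -⟩ := hG
  obtain ⟨hτsym, hτdiag, hτrec⟩ := hτ
  have hVne : Nonempty V := Fintype.card_pos_iff.mp (by omega)
  set π := statDist w with hπ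
  set p := step w with hp
  have hWpos : 0 < Wtot w := Finset.sum_pos (fun i _ => hdeg i) Finset.univ_nonempty
  have hπsum : ∑ i, π i = 1 := by
    simp only [hπ, statDist]
    rw [← Finset.sum_div]
    exact div_self hWpos.ne'
  have hstat : ∀ k, ∑ i, π i * p i k = π k := by
    intro k
    have hterm : ∀ i, π i * p i k = w i k / Wtot w := by
      intro i
      have h1 : deg w i ≠ 0 := (hdeg i).ne'
      simp only [hπ, hp, statDist, step]
      field_simp
    simp_rw [hterm]
    rw [← Finset.sum_div]
    have h2 : ∑ i, w i k = deg w k := by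
      rw [deg]; exact Finset.sum_congr rfl fun i _ => hsym i k
    rw [h2]
    simp [hπ, statDist]
  set S := ∑ i, ∑ j, π i * π j * τ i j with hS
  set r : V → V → ℝ := fun i j => (1/2) * ∑ k, (p i k * τ k j + p j k * τ i k) with hr
  have pull : ∀ (f : V → V → ℝ), (∑ i, ∑ j, (1/2:ℝ) * f i j) = (1/2) * ∑ i, ∑ j, f i j := by
    intro f; simp [Finset.mul_sum]
  have hC : (∑ i, ∑ j, π i * π j * r i j) = S := by
    have e : ∀ i j, π i * π j * r i j =
        (1/2) * ((∑ k, (π i * p i k) * (π j * τ k j)) + (∑ k, (π j * p j k) * (π i * τ i k))) := by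
      intro i j
      have hX : ∑ k, (π i * p i k) * (π j * τ k j) = π i * π j * ∑ k, p i k * τ k j := by
        rw [Finset.mul_sum]; exact Finset.sum_congr rfl fun k _ => by ring
      have hY : ∑ k, (π j * p j k) * (π i * τ i k) = π i * π j * ∑ k, p j k * τ i k := by
        rw [Finset.mul_sum]; exact Finset.sum_congr rfl fun k _ => by ring
      simp only [hr]
      rw [Finset.sum_add_distrib, hX, hY]; ring
    simp_rw [e]
    rw [pull]
    have hT1 : (∑ i, ∑ j, ((∑ k, (π i * p i k) * (π j * τ k j)) + (∑ k, (π j * p j k) * (π i * τ i k)))) =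
        (∑ i, ∑ j, ∑ k, (π i * p i k) * (π j * τ k j)) + (∑ i, ∑ j, ∑ k, (π j * p j k) * (π i * τ i k)) := by
      simp [Finset.sum_add_distrib]
    rw [hT1]
    have h1 : (∑ i, ∑ j, ∑ k, (π i * p i k) * (π j * τ k j)) = S := by
      rw [Finset.sum_comm]
      conv_lhs => enter [2, j]; rw [Finset.sum_comm]
      have : ∀ j k, (∑ i, (π i * p i k) * (π j * τ k j)) = π k * (π j * τ k j) := by
        intro j k
        rw [← Finset.sum_mul, hstat]
      simp_rw [this]
      rw [Finset.sum_comm, hS]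
      exact Finset.sum_congr rfl fun k _ => Finset.sum_congr rfl fun j _ => by ring
    have h2 : (∑ i, ∑ j, ∑ k, (π j * p j k) * (π i * τ i k)) = S := by
      conv_lhs => enter [2, i]; rw [Finset.sum_comm]
      have : ∀ i k, (∑ j, (π j * p j k) * (π i * τ i k)) = π k * (π i * τ i k) := by
        intro i k
        rw [← Finset.sum_mul, hstat]
      simp_rw [this]
      rw [hS]
      exact Finset.sum_congr rfl fun i _ => Finset.sum_congr rfl fun k _ => by ring
    rw [h1, h2]; ring
  have hrii : ∀ i, r i i = ∑ k, p i k * τ i k := by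
    intro i
    have h3 : ∀ k, p i k * τ k i + p i k * τ i k = 2 * (p i k * τ i k) := by
      intro k; rw [hτsym k i]; ring
    simp only [hr]
    simp_rw [h3]
    rw [← Finset.mul_sum]; ring
  have key : S = (∑ i, ∑ j, π i * π j * (1 + r i j)) - ∑ i, π i * π i * (1 + r i i) := by
    have h1 : S = ∑ i, ∑ j, if i = j then (0:ℝ) else π i * π j * (1 + r i j) := by
      rw [hS]
      refine Finset.sum_congr rfl fun i _ => Finset.sum_congr rfl fun j _ => ?_
      by_cases h : i = j
      · subst h; simp [hτdiag]
      · rw [if_neg h, hτrec i j h]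
    rw [h1]
    have h2 : ∀ i, (∑ j, if i = j then (0:ℝ) else π i * π j * (1 + r i j)) =
        (∑ j, π i * π j * (1 + r i j)) - π i * π i * (1 + r i i) := by
      intro i
      have h3 : ∀ j, (if i = j then (0:ℝ) else π i * π j * (1 + r i j)) =
          π i * π j * (1 + r i j) - (if i = j then π i * π j * (1 + r i j) else 0) := by
        intro j; by_cases h : i = j
        · subst h; simp
        · simp [h]
      simp_rw [h3]
      rw [Finset.sum_sub_distrib, Finset.sum_ite_eq]
      simp
    simp_rw [h2]
    rw [Finset.sum_sub_distrib]
  have hA : (∑ i, ∑ j, π i * π j) = 1 := by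
    simp_rw [← Finset.mul_sum, hπsum, mul_one, hπsum]
  have hexp : (∑ i, ∑ j, π i * π j * (1 + r i j)) = 1 + S := by
    have : ∀ (i j : V), π i * π j * (1 + r i j) = π i * π j + π i * π j * r i j := fun i j => by ring
    simp_rw [this, Finset.sum_add_distrib]
    rw [hA, hC]
  have hdiag : (∑ i, π i * π i * (1 + r i i)) = ∑ i, (π i) ^ 2 * remeet w τ i := by
    refine Finset.sum_congr rfl fun i _ => ?_
    rw [hrii i, remeet, ← hp]
    ring
  rw [hexp, hdiag] at key
  linarith

end EvoGraph
end
end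

section
/- Let G be a finite connected weighted graph with coalescence times (τ_{ij}), and for 0 < u ≤ 1 let (q_{ij}(u)) be the unique solution of the identity-by-descent system q_{ii}(u) = 1 and q_{ij}(u) = ((1−u)/2) Σ_{k∈V} (p_{ik} q_{jk}(u) + p_{jk} q_{ik}(u)) for i ≠ j. Then for every pair of vertices i, j, the limit as u → 0⁺ of (1 − q_{ij}(u))/u exists and equals τ_{ij}; that is, q_{ij}(u) = 1 − u τ_{ij} + O(u²) as u → 0⁺. -/
open Finset Filter Asymptotics

noncomputable section

namespace EvoGraph

variable {V : Type*} [Fintype V] [DecidableEq V]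

/-- `q` solves the identity-by-descent system with mutation probability `u`:
`q_{ii} = 1`, and `q_{ij} = ((1−u)/2) ∑_k (p_{ik} q_{jk} + p_{jk} q_{ik})` for
`i ≠ j`, with the unknowns required to be symmetric. -/
def IsIBD (w : V → V → ℝ) (u : ℝ) (q : V → V → ℝ) : Prop :=
  (∀ i j, q i j = q j i) ∧ (∀ i, q i i = 1) ∧
  ∀ i j, i ≠ j →
    q i j = ((1 - u) / 2) * ∑ k, (step w i k * q j k + step w j k * q i k)

section AuxLemmas

set_option linter.unusedSectionVars false

variable {w : V → V → ℝ}

lemma sum_step (hG : IsWeightedGraph w) (i : V) : ∑ k, step w i k = 1 := by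
  unfold step
  rw [← Finset.sum_div]
  exact div_self (hG.2.2.1 i).ne'

lemma step_pos (hG : IsWeightedGraph w) {i j : V} (h : 0 < w i j) : 0 < step w i j :=
  div_pos h (hG.2.2.1 i)

lemma maxPrinciple (hG : IsWeightedGraph w) (g : V → V → ℝ)
    (hdiag : ∀ i, g i i = 0)
    (hsub : ∀ i j, i ≠ j →
      (1 / 2) * ∑ k, (step w i k * g k j + step w j k * g i k) ≤ g i j) :
    ∀ i j, 0 ≤ g i j := by
  intro i0 j0
  by_contra hneg
  push_neg at hneg
  obtain ⟨p, -, hmin⟩ := Finset.exists_min_image (univ ×ˢ univ) (fun p => g p.1 p.2)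
    ⟨(i0, j0), by simp⟩
  have hmin' : ∀ a b : V, g p.1 p.2 ≤ g a b := fun a b => hmin (a, b) (by simp)
  set β := g p.1 p.2 with hβ
  have hβneg : β < 0 := lt_of_le_of_lt (hmin' i0 j0) hneg
  have key : ∀ a b : V, a ≠ b → g a b = β → ∀ k, 0 < w a k → g k b = β := by
    intro a b hab habβ k hk
    have hs1 : β ≤ ∑ m, step w a m * g m b := by
      calc β = ∑ m, step w a m * β := by rw [← Finset.sum_mul, sum_step hG, one_mul]
        _ ≤ ∑ m, step w a m * g m b :=
          Finset.sum_le_sum fun m _ =>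
            mul_le_mul_of_nonneg_left (hmin' m b) (step_nonneg hG a m)
    have hs2 : β ≤ ∑ m, step w b m * g a m := by
      calc β = ∑ m, step w b m * β := by rw [← Finset.sum_mul, sum_step hG, one_mul]
        _ ≤ ∑ m, step w b m * g a m :=
          Finset.sum_le_sum fun m _ =>
            mul_le_mul_of_nonneg_left (hmin' a m) (step_nonneg hG b m)
    have hle := hsub a b hab
    rw [habβ, Finset.sum_add_distrib] at hle
    have hsum1 : ∑ m, step w a m * g m b = β := le_antisymm (by linarith) hs1
    have hzero : ∑ m, step w a m * (g m b - β) = 0 := by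
      simp only [mul_sub]
      rw [Finset.sum_sub_distrib, ← Finset.sum_mul, sum_step hG, hsum1, one_mul, sub_self]
    have hterm := (Finset.sum_eq_zero_iff_of_nonneg
      (fun m _ => mul_nonneg (step_nonneg hG a m) (by linarith [hmin' m b]))).mp
      hzero k (Finset.mem_univ k)
    rcases mul_eq_zero.mp hterm with h | h
    · exact absurd h (step_pos hG hk).ne'
    · linarith
  have main : ∀ a : V, Relation.ReflTransGen (fun x y => 0 < w x y) a p.2 → g a p.2 ≠ β := by
    intro a h
    induction h using Relation.ReflTransGen.head_induction_on with
    | refl => rw [hdiag]; exact hβneg.ne'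
    | head hxy hyb ih =>
        rename_i x y
        intro hxβ
        by_cases hx : x = p.2
        · rw [hx, hdiag] at hxβ; exact hβneg.ne hxβ.symm
        · exact ih (key x p.2 hx hxβ y hxy)
  exact main p.1 (hG.2.2.2 p.1 p.2) hβ.symm

lemma comparison (hG : IsWeightedGraph w) (τ : V → V → ℝ) (hτ : IsCoalescent w τ)
    (f c : V → V → ℝ) (ε : ℝ)
    (hf0 : ∀ i, f i i = 0)
    (hfeq : ∀ i j, i ≠ j →
      f i j = (1 / 2) * ∑ k, (step w i k * f k j + step w j k * f i k) + c i j)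
    (hc : ∀ i j, i ≠ j → |c i j| ≤ ε) :
    ∀ i j, |f i j| ≤ ε * τ i j := by
  have goal : ∀ σ : ℝ, σ = 1 ∨ σ = -1 →
      ∀ i j, 0 ≤ ε * τ i j + σ * f i j := by
    intro σ hσ
    apply maxPrinciple hG (fun a b => ε * τ a b + σ * f a b)
    · intro a; rw [hτ.2.1, hf0]; ring
    · intro a b hab
      have hτe := hτ.2.2 a b hab
      have hfe := hfeq a b hab
      have hce := abs_le.mp (hc a b hab)
      have hsum : ∑ k, (step w a k * (ε * τ k b + σ * f k b)
            + step w b k * (ε * τ a k + σ * f a k))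
          = ε * (∑ k, (step w a k * τ k b + step w b k * τ a k))
            + σ * (∑ k, (step w a k * f k b + step w b k * f a k)) := by
        rw [Finset.mul_sum, Finset.mul_sum, ← Finset.sum_add_distrib]
        exact Finset.sum_congr rfl fun k _ => by ring
      rw [hsum]
      rcases hσ with h | h <;> subst h <;> nlinarith [hce.1, hce.2]
  intro a b
  have h1 := goal 1 (Or.inl rfl) a b
  have h2 := goal (-1) (Or.inr rfl) a b
  rw [abs_le]
  constructor <;> nlinarith

lemma ibd_abs_le_one (hG : IsWeightedGraph w) {u : ℝ} (hu0 : 0 < u) (hu1 : u ≤ 1)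
    {q : V → V → ℝ} (hq : IsIBD w u q) : ∀ i j, |q i j| ≤ 1 := by
  intro i0 j0
  obtain ⟨p, -, hmax⟩ := Finset.exists_max_image (univ ×ˢ univ) (fun p => |q p.1 p.2|)
    ⟨(i0, j0), by simp⟩
  have hmax' : ∀ a b, |q a b| ≤ |q p.1 p.2| := fun a b => hmax (a, b) (by simp)
  set M := |q p.1 p.2| with hM
  suffices hM1 : M ≤ 1 by exact le_trans (hmax' i0 j0) hM1
  by_contra hM1
  push_neg at hM1
  have hne : p.1 ≠ p.2 := by
    intro h
    rw [hM, h, hq.2.1] at hM1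
    simp at hM1
  have heq := hq.2.2 p.1 p.2 hne
  have habs : M ≤ (1 - u) * M := by
    calc M = |((1 - u) / 2) * ∑ k, (step w p.1 k * q p.2 k + step w p.2 k * q p.1 k)| := by
          rw [hM, heq]
      _ = ((1 - u) / 2) * |∑ k, (step w p.1 k * q p.2 k + step w p.2 k * q p.1 k)| := by
          rw [abs_mul, abs_of_nonneg (by linarith : (0:ℝ) ≤ (1 - u) / 2)]
      _ ≤ ((1 - u) / 2) * ∑ k, (step w p.1 k * M + step w p.2 k * M) := by
          refine mul_le_mul_of_nonneg_left ?_ (by linarith)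
          refine le_trans (Finset.abs_sum_le_sum_abs _ _) (Finset.sum_le_sum fun k _ => ?_)
          calc |step w p.1 k * q p.2 k + step w p.2 k * q p.1 k|
              ≤ |step w p.1 k * q p.2 k| + |step w p.2 k * q p.1 k| := abs_add_le _ _
            _ = step w p.1 k * |q p.2 k| + step w p.2 k * |q p.1 k| := by
                rw [abs_mul, abs_mul, abs_of_nonneg (step_nonneg hG _ _),
                  abs_of_nonneg (step_nonneg hG _ _)]
            _ ≤ step w p.1 k * M + step w p.2 k * M :=
                add_le_add (mul_le_mul_of_nonneg_left (hmax' p.2 k) (step_nonneg hG _ _))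
                  (mul_le_mul_of_nonneg_left (hmax' p.1 k) (step_nonneg hG _ _))
      _ = (1 - u) * M := by
          rw [Finset.sum_add_distrib, ← Finset.sum_mul, ← Finset.sum_mul,
            sum_step hG, sum_step hG]
          ring
  nlinarith

end AuxLemmas

/-- for every pair of vertices `i, j`, `(1 − q_{ij}(u))/u → τ_{ij}`
as `u → 0⁺`; that is, `q_{ij}(u) = 1 − u τ_{ij} + O(u²)` as `u → 0⁺`. -/
theorem ibd_low_mutation_expansion (w : V → V → ℝ) (hG : IsWeightedGraph w)
    (hN : 2 ≤ Fintype.card V) (τ : V → V → ℝ) (hτ : IsCoalescent w τ)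
    (q : ℝ → V → V → ℝ) (hq : ∀ u : ℝ, 0 < u → u ≤ 1 → IsIBD w u (q u))
    (i j : V) :
    Tendsto (fun u : ℝ => (1 - q u i j) / u) (nhdsWithin 0 (Set.Ioi 0))
      (nhds (τ i j)) ∧
    (fun u : ℝ => q u i j - (1 - u * τ i j)) =O[nhdsWithin 0 (Set.Ioi 0)]
      (fun u : ℝ => u ^ 2) := by
  have hτdiag := hτ.2.1
  have hτeq := hτ.2.2
  have hτnn : ∀ a b, 0 ≤ τ a b := by
    apply maxPrinciple hG τ hτdiag
    intro a b hab
    rw [hτeq a b hab]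
    linarith
  obtain ⟨pT, -, hTmax⟩ := Finset.exists_max_image (univ ×ˢ univ) (fun p => τ p.1 p.2)
    ⟨(i, j), by simp⟩
  have hTle : ∀ a b, τ a b ≤ τ pT.1 pT.2 := fun a b => hTmax (a, b) (by simp)
  set T := τ pT.1 pT.2 with hT
  have hT0 : 0 ≤ T := hτnn pT.1 pT.2
  set C := (10 * T + 2) * T with hC
  have key : ∀ u : ℝ, 0 < u → u ≤ 1 / 2 →
      ∀ a b, |(1 - q u a b) / u - τ a b| ≤ C * u := by
    intro u hu0 hu2
    have hu1 : u ≤ 1 := by linarith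
    have hq' := hq u hu0 hu1
    have hQsym := hq'.1
    have hQdiag := hq'.2.1
    have hQeq := hq'.2.2
    have hQabs := ibd_abs_le_one hG hu0 hu1 hq'
    have h1u : (0:ℝ) < 1 - u := by linarith
    set f : V → V → ℝ := fun a b => (1 - q u a b) / u - τ a b with hf
    set c : V → V → ℝ := fun a b => q u a b / (1 - u) - 1 with hc'
    have hf0 : ∀ a, f a a = 0 := by
      intro a; simp [hf, hQdiag, hτdiag]
    have hfeq : ∀ a b, a ≠ b →
        f a b = (1 / 2) * ∑ k, (step w a k * f k b + step w b k * f a k) + c a b := by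
      intro a b hab
      have hQe := hQeq a b hab
      have hτe := hτeq a b hab
      have hterm : ∀ k, step w a k * f k b + step w b k * f a k
          = (1 / u) * (step w a k + step w b k)
            - (1 / u) * (step w a k * q u b k + step w b k * q u a k)
            - (step w a k * τ k b + step w b k * τ a k) := by
        intro k
        simp only [hf]
        rw [hQsym k b]
        field_simp
        ring
      have hsum : ∑ k, (step w a k * f k b + step w b k * f a k)
          = (1 / u) * 2
            - (1 / u) * (∑ k, (step w a k * q u b k + step w b k * q u a k))
            - (∑ k, (step w a k * τ k b + step w b k * τ a k)) := by
        rw [Finset.sum_congr rfl fun k _ => hterm k]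
        rw [Finset.sum_sub_distrib, Finset.sum_sub_distrib, ← Finset.mul_sum, ← Finset.mul_sum,
          Finset.sum_add_distrib, sum_step hG, sum_step hG]
        norm_num
      rw [hsum]
      simp only [hf, hc']
      rw [hQe, hτe]
      field_simp
      ring
    have hc1 : ∀ a b, a ≠ b → |c a b| ≤ 4 := by
      intro a b hab
      simp only [hc']
      have hqb := abs_le.mp (hQabs a b)
      have hl : (-2:ℝ) ≤ q u a b / (1 - u) := by
        rw [le_div_iff₀ h1u]; nlinarith [hqb.1]
      have hr : q u a b / (1 - u) ≤ 2 := by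
        rw [div_le_iff₀ h1u]; nlinarith [hqb.2]
      rw [abs_le]; constructor <;> linarith
    have hf1 := comparison hG τ hτ f c 4 hf0 hfeq hc1
    have hr1 : ∀ a b, |(1 - q u a b) / u| ≤ 5 * T := by
      intro a b
      have h1 := hf1 a b
      simp only [hf] at h1
      have h2 := abs_le.mp h1
      have h3 := hTle a b
      have h4 := hτnn a b
      rw [abs_le]; constructor <;> linarith [h2.1, h2.2]
    have hc2 : ∀ a b, a ≠ b → |c a b| ≤ (10 * T + 2) * u := by
      intro a b hab
      simp only [hc']
      have h5 : |1 - q u a b| ≤ 5 * T * u := by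
        have h6 := hr1 a b
        rw [abs_div, abs_of_pos hu0, div_le_iff₀ hu0] at h6
        exact h6
      have hrw : q u a b / (1 - u) - 1 = (q u a b - 1 + u) / (1 - u) := by
        field_simp
        ring
      rw [hrw, abs_div, abs_of_pos h1u, div_le_iff₀ h1u]
      have h6 : |q u a b - 1 + u| ≤ 5 * T * u + u := by
        calc |q u a b - 1 + u| ≤ |q u a b - 1| + |u| := abs_add_le _ _
          _ = |1 - q u a b| + u := by rw [abs_sub_comm, abs_of_pos hu0]
          _ ≤ 5 * T * u + u := by linarith
      calc |q u a b - 1 + u| ≤ 5 * T * u + u := h6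
        _ ≤ (10 * T + 2) * u * (1 - u) := by
            nlinarith [mul_nonneg (mul_nonneg (show (0:ℝ) ≤ 10 * T + 2 by linarith) hu0.le)
              (show (0:ℝ) ≤ 1 / 2 - u by linarith)]
    have hf2 := comparison hG τ hτ f c ((10 * T + 2) * u) hf0 hfeq hc2
    intro a b
    have h7 := hf2 a b
    simp only [hf] at h7
    calc |(1 - q u a b) / u - τ a b| ≤ (10 * T + 2) * u * τ a b := h7
      _ = ((10 * T + 2) * u) * τ a b := by ring
      _ ≤ ((10 * T + 2) * u) * T :=
          mul_le_mul_of_nonneg_left (hTle a b) (mul_nonneg (by linarith) hu0.le)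
      _ = C * u := by rw [hC]; ring
  have hmem : Set.Ioo (0:ℝ) (1/2) ∈ nhdsWithin (0:ℝ) (Set.Ioi 0) :=
    Ioo_mem_nhdsGT_of_mem (by norm_num : (0:ℝ) ∈ Set.Ico (0:ℝ) (1/2))
  constructor
  · have h0 : Tendsto (fun u : ℝ => (1 - q u i j) / u - τ i j)
        (nhdsWithin (0:ℝ) (Set.Ioi 0)) (nhds 0) := by
      apply squeeze_zero_norm'
      · filter_upwards [hmem] with u hu
        simpa [Real.norm_eq_abs] using key u hu.1 hu.2.le i j
      · have h1 : Tendsto (fun u : ℝ => C * u) (nhds (0:ℝ)) (nhds (C * 0)) :=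
          (continuous_const.mul continuous_id).tendsto 0
        simpa using h1.mono_left nhdsWithin_le_nhds
    have h2 := h0.add (tendsto_const_nhds (α := ℝ) (x := τ i j))
    simpa using h2
  · rw [isBigO_iff]
    refine ⟨C, ?_⟩
    filter_upwards [hmem] with u hu
    have hk := key u hu.1 hu.2.le i j
    have hu0 : (0:ℝ) < u := hu.1
    have hqe : q u i j - (1 - u * τ i j) = -(u * ((1 - q u i j) / u - τ i j)) := by
      field_simp
      ring
    rw [Real.norm_eq_abs, Real.norm_eq_abs, hqe, abs_neg, abs_mul, abs_of_pos hu0]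
    calc u * |(1 - q u i j) / u - τ i j| ≤ u * (C * u) :=
        mul_le_mul_of_nonneg_left hk hu0.le
      _ = C * |u ^ 2| := by rw [abs_of_nonneg (sq_nonneg u)]; ring

end EvoGraph
end
end

section
/- Let G be the unweighted complete bipartite graph K_{a,b} with a, b ≥ 1 and a + b ≥ 3: the vertex set is the disjoint union of sets V₁, V₂ with |V₁| = a, |V₂| = b, w_{ij} = 1 whenever i and j lie in different parts, and w_{ij} = 0 otherwise. Let (τ_{ij}) be the coalescence times of G. Then τ^{(3)} = τ^{(1)}; consequently the critical benefit-to-cost ratio τ^{(2)}/(τ^{(3)} − τ^{(1)}) is undefined (its denominator vanishes) and cooperation is never favored on a complete bipartite graph. -/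
open Finset Filter Asymptotics

noncomputable section

namespace EvoGraph

variable {V : Type*} [Fintype V] [DecidableEq V]

/-- The unweighted complete bipartite graph `K_{a,b}`: weight `1` between
vertices in different parts, and `0` otherwise. -/
def bipW (a b : ℕ) : (Fin a ⊕ Fin b) → (Fin a ⊕ Fin b) → ℝ
  | Sum.inl _, Sum.inr _ => 1
  | Sum.inr _, Sum.inl _ => 1
  | _, _ => 0

lemma bip_deg_inl {a b : ℕ} (i : Fin a) : deg (bipW a b) (Sum.inl i) = b := by
  simp [deg, bipW, Fintype.sum_sum_type]

lemma bip_deg_inr {a b : ℕ} (j : Fin b) : deg (bipW a b) (Sum.inr j) = a := by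
  simp [deg, bipW, Fintype.sum_sum_type]

lemma bip_cube {a b : ℕ} (ha : 1 ≤ a) (hb : 1 ≤ b) :
    stepMat (bipW a b) ^ 3 = stepMat (bipW a b) := by
  have ha' : (a : ℝ) ≠ 0 := Nat.cast_ne_zero.mpr (by omega)
  have hb' : (b : ℝ) ≠ 0 := Nat.cast_ne_zero.mpr (by omega)
  ext i j
  rw [pow_succ, pow_succ, pow_one]
  simp only [Matrix.mul_apply, Fintype.sum_sum_type]
  rcases i with i | i <;> rcases j with j | j <;>
    simp only [stepMat, Matrix.of_apply, step, bip_deg_inl, bip_deg_inr, bipW,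
      Finset.sum_mul, Finset.mul_sum, Finset.sum_const, Finset.card_univ,
      Fintype.card_fin, nsmul_eq_mul, zero_div, zero_mul, mul_zero, add_zero,
      zero_add, Finset.sum_const_zero] <;>
    field_simp <;> left <;> ring

/-- on the complete bipartite graph `K_{a,b}` (`a, b ≥ 1`,
`a + b ≥ 3`), `τ^{(3)} = τ^{(1)}`, so the denominator of the critical
benefit-to-cost ratio vanishes. -/
theorem completeBipartite_tau3_eq_tau1 (a b : ℕ) (ha : 1 ≤ a) (hb : 1 ≤ b)
    (hab : 3 ≤ a + b)
    (τ : (Fin a ⊕ Fin b) → (Fin a ⊕ Fin b) → ℝ)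
    (hτ : IsCoalescent (bipW a b) τ) :
    tauWalk (bipW a b) τ 3 = tauWalk (bipW a b) τ 1 := by
  simp only [tauWalk, stepN, bip_cube ha hb, pow_one]

end EvoGraph
end
end
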